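/- Let λ ∈ ℕ² and x ∈ B(λ) with ẽ₁x ≠ 0 ≠ ẽ₂x, ε₁(x) ≥ 2 and (Δ^e_ε(1,2,x), Δ^e_ε(2,1,x)) = (1,1). Then there exists z ≠ 0 with z = ẽ₁ẽ₂²ẽ₁²x = ẽ₁ẽ₂ẽ₁ẽ₂ẽ₁x = ẽ₂ẽ₁³ẽ₂x (all intermediate applications nonzero). -/

import Mathlib

abbrev V4 : Type := ℤ × ℤ × ℤ × ℤ

def NN : V4 → Prop
  | (a, b, c, d) => 0 ≤ a ∧ 0 ≤ b ∧ 0 ≤ c ∧ 0 ≤ d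

def Rm : V4 → V4
  | (a, b, c, d) =>
    let n1 := max b (max b d + c - a)
    let n2 := max a c + 2*b
    let n3 := min (c + d) (a + min b d)
    let n4 := min a c
    let m := max (2*n3) (n2 + n4)
    (n1, m - n2, n2 + n3 - m, n4 - 2*n3 + m)

def Sm : V4 → V4
  | (a, b, c, d) =>
    let p1 := max b (max b d + 2*(c - a))
    let p2 := max a c + b
    let p3 := min (2*c + d) (2*a + min b d)
    let p4 := min a c
    let v := max p3 (p2 + p4)
    (p1, v - p2, 2*p2 + p3 - 2*v, p4 - p3 + v)

abbrev M : Type := V4 × V4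

def eps1 (m : M) : ℤ := m.1.1
def eps2 (m : M) : ℤ := m.2.1
def phi1 (l1 : ℤ) (m : M) : ℤ :=
  m.1.1 + l1 - 2*(m.2.2.1 + 2*m.2.2.2.1 + m.2.2.2.2) + 2*(m.2.1 + m.2.2.1 + m.2.2.2.1)
def phi2 (l2 : ℤ) (m : M) : ℤ :=
  m.2.1 + l2 + (m.2.2.1 + 2*m.2.2.2.1 + m.2.2.2.2) - 2*(m.2.1 + m.2.2.1 + m.2.2.2.1)

def e1m (m : M) : Option M :=
  if 0 < m.1.1 then
    some ((m.1.1 - 1, m.1.2.1, m.1.2.2.1, m.1.2.2.2),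
          Rm (m.1.1 - 1, m.1.2.1, m.1.2.2.1, m.1.2.2.2))
  else none

def e2m (m : M) : Option M :=
  if 0 < m.2.1 then
    some (Sm (m.2.1 - 1, m.2.2.1, m.2.2.2.1, m.2.2.2.2),
          (m.2.1 - 1, m.2.2.1, m.2.2.2.1, m.2.2.2.2))
  else none

def f1m (l1 : ℤ) (m : M) : Option M :=
  if 0 < phi1 l1 m then
    some ((m.1.1 + 1, m.1.2.1, m.1.2.2.1, m.1.2.2.2),
          Rm (m.1.1 + 1, m.1.2.1, m.1.2.2.1, m.1.2.2.2))
  else none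

def f2m (l2 : ℤ) (m : M) : Option M :=
  if 0 < phi2 l2 m then
    some (Sm (m.2.1 + 1, m.2.2.1, m.2.2.2.1, m.2.2.2.2),
          (m.2.1 + 1, m.2.2.1, m.2.2.2.1, m.2.2.2.2))
  else none

def Bset (l1 l2 : ℤ) : Set M :=
  {m | NN m.1 ∧ NN m.2 ∧ Rm m.1 = m.2 ∧ m.2.2.2.1 ≤ l1 ∧ m.1.2.2.1 ≤ l2}

def chainM (ops : List (M → Option M)) (x : M) : Option M :=
  ops.foldr (fun g o => o.bind g) (some x)

set_option maxHeartbeats 2000000 in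
theorem stmt_12 (l1 l2 : ℕ) (x : M) (hx : x ∈ Bset (l1 : ℤ) (l2 : ℤ))
    (x1e x2e : M) (he1 : e1m x = some x1e) (he2 : e2m x = some x2e)
    (heps : 2 ≤ eps1 x)
    (hD1 : eps2 x1e = eps2 x + 1) (hD2 : eps1 x2e = eps1 x + 1) :
    ∃ z : M, chainM [e1m, e2m, e2m, e1m, e1m] x = some z ∧
      chainM [e1m, e2m, e1m, e2m, e1m] x = some z ∧
      chainM [e2m, e1m, e1m, e1m, e2m] x = some z := by
  obtain ⟨⟨a1,a2,a3,a4⟩, y1,y2,y3,y4⟩ := x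
  obtain ⟨⟨ha1,ha2,ha3,ha4⟩, ⟨hy1,hy2,hy3,hy4⟩, hR, hl1, hl2⟩ := hx
  simp only [Rm, Prod.mk.injEq] at hR
  obtain ⟨hR1,hR2,hR3,hR4⟩ := hR
  simp only [eps1] at heps
  simp only [e1m] at he1
  simp only [e2m] at he2
  rw [if_pos (show (0:ℤ) < a1 by omega)] at he1
  have hpy : 0 < y1 := by
    by_contra h
    rw [if_neg h] at he2
    exact nomatch he2
  rw [if_pos hpy] at he2
  obtain rfl := Option.some.inj he1
  obtain rfl := Option.some.inj he2
  simp only [eps1, eps2, Rm, Sm] at hD1 hD2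
  have k1 : y1 = a2 + 1 := by omega
  have k2 : y2 = a1 := by omega
  have k3 : y3 = a4 := by omega
  have k4 : y4 = a1 + 1 + 2 * a2 - 2 * a4 := by omega
  have k5 : a3 = a1 + 1 := by omega
  have k6 : a4 ≤ a2 := by omega
  subst k5 k4 k1
  rw [k2, k3]
  clear he1 he2 hD1 hD2 hR1 hR2 hR3 hR4 hl1 hl2 hpy hy1 hy2 hy3 hy4 k2 k3
  have sA0 : e1m (((a1, a2, a1 + 1, a4), (a2 + 1, a1, a4, a1 + 1 + 2 * a2 - 2 * a4)) : M) = some (((a1 - 1), (a2), (a1 + 1), (a4)), ((a2 + 2), (a1 - 1), (a4), (a1 + 2*a2 - 2*a4 + 1))) := by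
    simp only [e1m, Rm, Sm]
    rw [if_pos (show (0:ℤ) < a1 by omega)]
    simp only [Option.some.injEq, Prod.mk.injEq, true_and, and_true]
    omega
  have sA1 : e1m ((((a1 - 1), (a2), (a1 + 1), (a4)), ((a2 + 2), (a1 - 1), (a4), (a1 + 2*a2 - 2*a4 + 1))) : M) = some (((a1 - 2), (a2), (a1 + 1), (a4)), ((a2 + 3), (a1 - 2), (a4), (a1 + 2*a2 - 2*a4 + 1))) := by
    simp only [e1m, Rm, Sm]
    rw [if_pos (show (0:ℤ) < (a1 - 1) by omega)]
    simp only [Option.some.injEq, Prod.mk.injEq, true_and, and_true]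
    omega
  have sA2 : e2m ((((a1 - 2), (a2), (a1 + 1), (a4)), ((a2 + 3), (a1 - 2), (a4), (a1 + 2*a2 - 2*a4 + 1))) : M) = some (((a1 - 2), (a2 + 1), (a1 - 1), (a4)), ((a2 + 2), (a1 - 2), (a4), (a1 + 2*a2 - 2*a4 + 1))) := by
    simp only [e2m, Rm, Sm]
    rw [if_pos (show (0:ℤ) < (a2 + 3) by omega)]
    simp only [Option.some.injEq, Prod.mk.injEq, true_and, and_true]
    omega
  have sA3 : e2m ((((a1 - 2), (a2 + 1), (a1 - 1), (a4)), ((a2 + 2), (a1 - 2), (a4), (a1 + 2*a2 - 2*a4 + 1))) : M) = some (((a1 - 1), (a2 + 1), (a1 - 2), (a4)), ((a2 + 1), (a1 - 2), (a4), (a1 + 2*a2 - 2*a4 + 1))) := by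
    simp only [e2m, Rm, Sm]
    rw [if_pos (show (0:ℤ) < (a2 + 2) by omega)]
    simp only [Option.some.injEq, Prod.mk.injEq, true_and, and_true]
    omega
  have sA4 : e1m ((((a1 - 1), (a2 + 1), (a1 - 2), (a4)), ((a2 + 1), (a1 - 2), (a4), (a1 + 2*a2 - 2*a4 + 1))) : M) = some (((a1 - 2), (a2 + 1), (a1 - 2), (a4)), ((a2 + 1), (a1 - 2), (a4), (a1 + 2*a2 - 2*a4))) := by
    simp only [e1m, Rm, Sm]
    rw [if_pos (show (0:ℤ) < (a1 - 1) by omega)]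
    simp only [Option.some.injEq, Prod.mk.injEq, true_and, and_true]
    omega
  have sB0 : e1m (((a1, a2, a1 + 1, a4), (a2 + 1, a1, a4, a1 + 1 + 2 * a2 - 2 * a4)) : M) = some (((a1 - 1), (a2), (a1 + 1), (a4)), ((a2 + 2), (a1 - 1), (a4), (a1 + 2*a2 - 2*a4 + 1))) := by
    simp only [e1m, Rm, Sm]
    rw [if_pos (show (0:ℤ) < a1 by omega)]
    simp only [Option.some.injEq, Prod.mk.injEq, true_and, and_true]
    omega
  have sB1 : e2m ((((a1 - 1), (a2), (a1 + 1), (a4)), ((a2 + 2), (a1 - 1), (a4), (a1 + 2*a2 - 2*a4 + 1))) : M) = some (((a1 - 1), (a2 + 1), (a1 - 1), (a4)), ((a2 + 1), (a1 - 1), (a4), (a1 + 2*a2 - 2*a4 + 1))) := by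
    simp only [e2m, Rm, Sm]
    rw [if_pos (show (0:ℤ) < (a2 + 2) by omega)]
    simp only [Option.some.injEq, Prod.mk.injEq, true_and, and_true]
    omega
  have sB2 : e1m ((((a1 - 1), (a2 + 1), (a1 - 1), (a4)), ((a2 + 1), (a1 - 1), (a4), (a1 + 2*a2 - 2*a4 + 1))) : M) = some (((a1 - 2), (a2 + 1), (a1 - 1), (a4)), ((a2 + 2), (a1 - 2), (a4), (a1 + 2*a2 - 2*a4 + 1))) := by
    simp only [e1m, Rm, Sm]
    rw [if_pos (show (0:ℤ) < (a1 - 1) by omega)]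
    simp only [Option.some.injEq, Prod.mk.injEq, true_and, and_true]
    omega
  have sB3 : e2m ((((a1 - 2), (a2 + 1), (a1 - 1), (a4)), ((a2 + 2), (a1 - 2), (a4), (a1 + 2*a2 - 2*a4 + 1))) : M) = some (((a1 - 1), (a2 + 1), (a1 - 2), (a4)), ((a2 + 1), (a1 - 2), (a4), (a1 + 2*a2 - 2*a4 + 1))) := by
    simp only [e2m, Rm, Sm]
    rw [if_pos (show (0:ℤ) < (a2 + 2) by omega)]
    simp only [Option.some.injEq, Prod.mk.injEq, true_and, and_true]
    omega
  have sB4 : e1m ((((a1 - 1), (a2 + 1), (a1 - 2), (a4)), ((a2 + 1), (a1 - 2), (a4), (a1 + 2*a2 - 2*a4 + 1))) : M) = some (((a1 - 2), (a2 + 1), (a1 - 2), (a4)), ((a2 + 1), (a1 - 2), (a4), (a1 + 2*a2 - 2*a4))) := by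
    simp only [e1m, Rm, Sm]
    rw [if_pos (show (0:ℤ) < (a1 - 1) by omega)]
    simp only [Option.some.injEq, Prod.mk.injEq, true_and, and_true]
    omega
  have sC0 : e2m (((a1, a2, a1 + 1, a4), (a2 + 1, a1, a4, a1 + 1 + 2 * a2 - 2 * a4)) : M) = some (((a1 + 1), (a2), (a1), (a4)), ((a2), (a1), (a4), (a1 + 2*a2 - 2*a4 + 1))) := by
    simp only [e2m, Rm, Sm]
    rw [if_pos (show (0:ℤ) < a2 + 1 by omega)]
    simp only [Option.some.injEq, Prod.mk.injEq, true_and, and_true]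
    omega
  have sC1 : e1m ((((a1 + 1), (a2), (a1), (a4)), ((a2), (a1), (a4), (a1 + 2*a2 - 2*a4 + 1))) : M) = some (((a1), (a2), (a1), (a4)), ((a2), (a1), (a4), (a1 + 2*a2 - 2*a4))) := by
    simp only [e1m, Rm, Sm]
    rw [if_pos (show (0:ℤ) < (a1 + 1) by omega)]
    simp only [Option.some.injEq, Prod.mk.injEq, true_and, and_true]
    omega
  have sC2 : e1m ((((a1), (a2), (a1), (a4)), ((a2), (a1), (a4), (a1 + 2*a2 - 2*a4))) : M) = some (((a1 - 1), (a2), (a1), (a4)), ((a2 + 1), (a1 - 1), (a4), (a1 + 2*a2 - 2*a4))) := by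
    simp only [e1m, Rm, Sm]
    rw [if_pos (show (0:ℤ) < (a1) by omega)]
    simp only [Option.some.injEq, Prod.mk.injEq, true_and, and_true]
    omega
  have sC3 : e1m ((((a1 - 1), (a2), (a1), (a4)), ((a2 + 1), (a1 - 1), (a4), (a1 + 2*a2 - 2*a4))) : M) = some (((a1 - 2), (a2), (a1), (a4)), ((a2 + 2), (a1 - 2), (a4), (a1 + 2*a2 - 2*a4))) := by
    simp only [e1m, Rm, Sm]
    rw [if_pos (show (0:ℤ) < (a1 - 1) by omega)]
    simp only [Option.some.injEq, Prod.mk.injEq, true_and, and_true]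
    omega
  have sC4 : e2m ((((a1 - 2), (a2), (a1), (a4)), ((a2 + 2), (a1 - 2), (a4), (a1 + 2*a2 - 2*a4))) : M) = some (((a1 - 2), (a2 + 1), (a1 - 2), (a4)), ((a2 + 1), (a1 - 2), (a4), (a1 + 2*a2 - 2*a4))) := by
    simp only [e2m, Rm, Sm]
    rw [if_pos (show (0:ℤ) < (a2 + 2) by omega)]
    simp only [Option.some.injEq, Prod.mk.injEq, true_and, and_true]
    omega
  refine ⟨(((a1 - 2), (a2 + 1), (a1 - 2), (a4)), ((a2 + 1), (a1 - 2), (a4), (a1 + 2*a2 - 2*a4))), ?_, ?_, ?_⟩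
  · simp only [chainM, List.foldr, Option.bind_some, sA0, sA1, sA2, sA3, sA4]
  · simp only [chainM, List.foldr, Option.bind_some, sB0, sB1, sB2, sB3, sB4]
  · simp only [chainM, List.foldr, Option.bind_some, sC0, sC1, sC2, sC3, sC4]
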